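/- arXiv:2009.10060 — 4 statements merged into one kernel-verified Lean document; each statement's English description precedes it below -/
import Mathlib

section
/- Checking passwords in descending order of probability is optimal: if σ : {1,…,n} → P is a bijection with p(σ(1)) ≥ p(σ(2)) ≥ … ≥ p(σ(n)), then for every bijection π : {1,…,n} → P and every budget 0 ≤ B ≤ n, U(v,k,σ,B) ≥ U(v,k,π,B), provided v ≥ 0 and k ≥ 0. -/
/- Context: P finite set of passwords, p a probability distribution on P,
strategies (π, B) with π : Fin (Fintype.card P) ≃ P (0-indexed bijection) and B ≤ |P|.
λ(π, B) = Σ_{i=1}^{B} p(π(i)), and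
U(v,k,π,B) = v·λ(π,B) − k·Σ_{i=1}^{B} (1 − λ(π, i−1)). -/

variable {P : Type*} [Fintype P]

noncomputable def lam (p : P → ℝ) (π : Fin (Fintype.card P) ≃ P) (B : ℕ) : ℝ :=
  ∑ i ∈ Finset.univ.filter (fun i : Fin (Fintype.card P) => (i : ℕ) < B), p (π i)

noncomputable def U (p : P → ℝ) (v k : ℝ) (π : Fin (Fintype.card P) ≃ P) (B : ℕ) : ℝ :=
  v * lam p π B - k * ∑ i ∈ Finset.range B, (1 - lam p π i)


lemma sum_le_sorted {n : ℕ} (f : Fin n → ℝ) (hf : ∀ i j : Fin n, i ≤ j → f j ≤ f i) :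
    ∀ (b : ℕ) (S : Finset (Fin n)), S.card = b →
      ∑ i ∈ S, f i ≤ ∑ i ∈ Finset.univ.filter (fun i : Fin n => (i : ℕ) < b), f i := by
  intro b
  induction b with
  | zero => intro S hS; simp [Finset.card_eq_zero.mp hS]
  | succ b ih =>
    intro S hS
    have hne : S.Nonempty := Finset.card_pos.mp (by omega)
    set m := S.max' hne with hm
    have hsub : S ⊆ Finset.Iic m := fun x hx => Finset.mem_Iic.mpr (S.le_max' x hx)
    have hcard := Finset.card_le_card hsub
    rw [hS, Fin.card_Iic] at hcard
    have hbm : b ≤ (m : ℕ) := by omega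
    have hbn : b < n := lt_of_le_of_lt hbm m.isLt
    have hfm : f m ≤ f ⟨b, hbn⟩ := hf ⟨b, hbn⟩ m hbm
    have hmem : m ∈ S := S.max'_mem hne
    have hins : Finset.univ.filter (fun i : Fin n => (i : ℕ) < b + 1)
        = insert ⟨b, hbn⟩ (Finset.univ.filter (fun i : Fin n => (i : ℕ) < b)) := by
      ext i
      simp [Fin.ext_iff]
      omega
    have hnotmem : (⟨b, hbn⟩ : Fin n) ∉ Finset.univ.filter (fun i : Fin n => (i : ℕ) < b) := by
      simp
    rw [hins, Finset.sum_insert hnotmem, ← Finset.sum_erase_add S f hmem]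
    exact add_le_add (ih _ (by rw [Finset.card_erase_of_mem hmem, hS]; omega))
      hfm |>.trans_eq (add_comm _ _)

lemma lam_le_lam (p : P → ℝ)
    (σ π : Fin (Fintype.card P) ≃ P)
    (hσ : ∀ i j : Fin (Fintype.card P), i ≤ j → p (σ j) ≤ p (σ i))
    (b : ℕ) (hb : b ≤ Fintype.card P) : lam p π b ≤ lam p σ b := by
  set e : Fin (Fintype.card P) ≃ Fin (Fintype.card P) := π.trans σ.symm with he
  set T := Finset.univ.filter (fun i : Fin (Fintype.card P) => (i : ℕ) < b) with hT
  have hcardT : T.card = b := by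
    have : T = (Finset.range b).attachFin (fun m hm => lt_of_lt_of_le (Finset.mem_range.mp hm) hb) := by
      ext i; simp [hT]
    rw [this, Finset.card_attachFin, Finset.card_range]
  have h1 : lam p π b = ∑ j ∈ T.image e, p (σ j) := by
    rw [Finset.sum_image (fun x _ y _ h => e.injective h)]
    unfold T
    simp only [lam]
    congr 1
    ext i
    simp [he]
  rw [h1]
  have : (T.image e).card = b := by rw [Finset.card_image_of_injective _ e.injective, hcardT]
  exact sum_le_sorted (fun i => p (σ i)) hσ b _ this

/-- Checking passwords in descending order of probability is optimal: if σ orders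
passwords so that p(σ(1)) ≥ p(σ(2)) ≥ … ≥ p(σ(n)), then for every bijection π
and every budget B ≤ n, U(v,k,σ,B) ≥ U(v,k,π,B), provided v ≥ 0 and k ≥ 0. -/
theorem descending_order_optimal (p : P → ℝ) (hp : ∀ pw, 0 ≤ p pw)
    (hsum : ∑ pw, p pw = 1) (v k : ℝ) (hv : 0 ≤ v) (hk : 0 ≤ k)
    (σ : Fin (Fintype.card P) ≃ P)
    (hσ : ∀ i j : Fin (Fintype.card P), i ≤ j → p (σ j) ≤ p (σ i))
    (π : Fin (Fintype.card P) ≃ P) (B : ℕ) (hB : B ≤ Fintype.card P) :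
    U p v k π B ≤ U p v k σ B := by
  unfold U
  apply sub_le_sub
  · exact mul_le_mul_of_nonneg_left (lam_le_lam p σ π hσ B hB) hv
  · apply mul_le_mul_of_nonneg_left _ hk
    apply Finset.sum_le_sum
    intro i hi
    have : lam p π i ≤ lam p σ i :=
      lam_le_lam p σ π hσ i (le_trans (le_of_lt (Finset.mem_range.mp hi)) hB)
    linarith
end

section
/- Theorem 1 (equivalence classes are checked atomically): let v ≥ 0 and k > 0, and let (π*, B*) be an optimal strategy, i.e., U(v,k,π*,B*) ≥ U(v,k,π,B) for all strategies (π,B). If two passwords pw_i, pw_j ∈ P satisfy p(pw_i) = p(pw_j) > 0, then ind_{π*}(pw_i) ≤ B* if and only if ind_{π*}(pw_j) ≤ B*, where ind_{π*}(pw) denotes the position of pw in the order π*. -/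
/- Context: P finite set of passwords, p a probability distribution on P,
strategies (π, B) with π : Fin (Fintype.card P) ≃ P (0-indexed bijection) and B ≤ |P|.
λ(π, B) = Σ_{i=1}^{B} p(π(i)), and
U(v,k,π,B) = v·λ(π,B) − k·Σ_{i=1}^{B} (1 − λ(π, i−1)).
The (1-indexed) position of pw in π is ind_π(pw) = (π.symm pw : ℕ) + 1. -/

variable {P : Type*} [Fintype P]

lemma lam_congr (p : P → ℝ) (π π' : Fin (Fintype.card P) ≃ P) (B : ℕ)
    (h : ∀ i : Fin (Fintype.card P), (i : ℕ) < B → p (π i) = p (π' i)) :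
    lam p π B = lam p π' B := by
  unfold lam
  exact Finset.sum_congr rfl (fun i hi => h i (by simpa using hi))

lemma lam_succ (p : P → ℝ) (π : Fin (Fintype.card P) ≃ P) (B : ℕ)
    (hB : B < Fintype.card P) :
    lam p π (B + 1) = lam p π B + p (π ⟨B, hB⟩) := by
  unfold lam
  have hset : Finset.univ.filter (fun i : Fin (Fintype.card P) => (i : ℕ) < B + 1)
      = insert (⟨B, hB⟩ : Fin (Fintype.card P))
        (Finset.univ.filter (fun i : Fin (Fintype.card P) => (i : ℕ) < B)) := by
    ext i
    simp only [Finset.mem_insert, Finset.mem_filter, Finset.mem_univ, true_and, Fin.ext_iff]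
    omega
  rw [hset, Finset.sum_insert (by simp)]
  ring

lemma U_succ (p : P → ℝ) (v k : ℝ) (π : Fin (Fintype.card P) ≃ P) (B : ℕ)
    (hB : B < Fintype.card P) :
    U p v k π (B + 1) = U p v k π B + v * p (π ⟨B, hB⟩) - k * (1 - lam p π B) := by
  unfold U
  rw [lam_succ p π B hB, Finset.sum_range_succ]
  ring

lemma U_congr (p : P → ℝ) (v k : ℝ) (π π' : Fin (Fintype.card P) ≃ P) (B : ℕ)
    (h : ∀ i, i ≤ B → lam p π i = lam p π' i) :
    U p v k π B = U p v k π' B := by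
  unfold U
  rw [h B le_rfl]
  congr 1
  congr 1
  exact Finset.sum_congr rfl (fun i hi => by
    rw [h i (le_of_lt (Finset.mem_range.mp hi))])

-- swap with both indices outside the prefix
lemma lam_swap_out (p : P → ℝ) (π : Fin (Fintype.card P) ≃ P) (B : ℕ)
    (j₀ j₁ : Fin (Fintype.card P)) (h₀ : B ≤ (j₀ : ℕ)) (h₁ : B ≤ (j₁ : ℕ)) :
    lam p ((Equiv.swap j₀ j₁).trans π) B = lam p π B := by
  apply lam_congr
  intro i hi
  simp only [Equiv.trans_apply]
  rw [Equiv.swap_apply_of_ne_of_ne]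
  · exact fun h => by subst h; omega
  · exact fun h => by subst h; omega

-- swap with both indices inside the prefix
lemma lam_swap_in (p : P → ℝ) (π : Fin (Fintype.card P) ≃ P) (B : ℕ)
    (j₀ j₁ : Fin (Fintype.card P)) (h₀ : (j₀ : ℕ) < B) (h₁ : (j₁ : ℕ) < B) :
    lam p ((Equiv.swap j₀ j₁).trans π) B = lam p π B := by
  unfold lam
  simp only [Equiv.trans_apply]
  exact Equiv.Perm.sum_comp (Equiv.swap j₀ j₁) _ (fun i => p (π i)) (by
    intro x hx
    simp only [Set.mem_setOf_eq, Equiv.swap_apply_ne_self_iff] at hx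
    rcases hx.2 with h | h <;> subst h <;> simp [h₀, h₁])

-- swap with j₀ inside, j₁ outside
lemma lam_swap_mix (p : P → ℝ) (π : Fin (Fintype.card P) ≃ P) (B : ℕ)
    (j₀ j₁ : Fin (Fintype.card P)) (h₀ : (j₀ : ℕ) < B) (h₁ : ¬ (j₁ : ℕ) < B) :
    lam p ((Equiv.swap j₀ j₁).trans π) B = lam p π B - p (π j₀) + p (π j₁) := by
  unfold lam
  have hj₀ : j₀ ∈ Finset.univ.filter (fun i : Fin (Fintype.card P) => (i : ℕ) < B) := by
    simp [h₀]
  rw [← Finset.add_sum_erase _ _ hj₀, ← Finset.add_sum_erase _ (fun i => p (π i)) hj₀]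
  have h1 : ((Equiv.swap j₀ j₁).trans π) j₀ = π j₁ := by simp
  rw [h1]
  have h2 : ∀ i ∈ (Finset.univ.filter (fun i : Fin (Fintype.card P) => (i : ℕ) < B)).erase j₀,
      p (((Equiv.swap j₀ j₁).trans π) i) = p (π i) := by
    intro i hi
    simp only [Finset.mem_erase, Finset.mem_filter] at hi
    simp only [Equiv.trans_apply]
    rw [Equiv.swap_apply_of_ne_of_ne hi.1 (fun h => by subst h; exact h₁ hi.2.2)]
  rw [Finset.sum_congr rfl h2]
  ring

lemma lam_le (p : P → ℝ) (hp : ∀ pw, 0 ≤ p pw) (hsum : ∑ pw, p pw = 1)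
    (π : Fin (Fintype.card P) ≃ P) (B : ℕ) (y : P) (hy : B ≤ (π.symm y : ℕ)) :
    lam p π B ≤ 1 - p y := by
  have h1 : ∑ i : Fin (Fintype.card P), p (π i) = 1 := by
    rw [Equiv.sum_comp π p]; exact hsum
  have h2 : 1 - p y = ∑ i ∈ Finset.univ.erase (π.symm y), p (π i) := by
    rw [← Finset.add_sum_erase _ _ (Finset.mem_univ (π.symm y))] at h1
    simp only [Equiv.apply_symm_apply] at h1
    linarith
  rw [h2]
  unfold lam
  apply Finset.sum_le_sum_of_subset_of_nonneg
  · intro i hi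
    simp only [Finset.mem_filter, Finset.mem_univ, true_and] at hi
    simp only [Finset.mem_erase, Finset.mem_univ, and_true]
    exact fun h => by subst h; omega
  · exact fun i _ _ => hp _

lemma key_lemma (p : P → ℝ) (hp : ∀ pw, 0 ≤ p pw)
    (hsum : ∑ pw, p pw = 1) (v k : ℝ) (hv : 0 ≤ v) (hk : 0 < k)
    (πs : Fin (Fintype.card P) ≃ P) (Bs : ℕ) (hBs : Bs ≤ Fintype.card P)
    (hopt : ∀ (π : Fin (Fintype.card P) ≃ P) (B : ℕ), B ≤ Fintype.card P →
      U p v k π B ≤ U p v k πs Bs)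
    (x y : P) (heq : p x = p y) (hpos : 0 < p x)
    (hx : (πs.symm x : ℕ) + 1 ≤ Bs) : (πs.symm y : ℕ) + 1 ≤ Bs := by
  by_contra hy
  push_neg at hy
  have hb : Bs ≤ (πs.symm y : ℕ) := by omega
  have hbN : (πs.symm y : ℕ) < Fintype.card P := (πs.symm y).isLt
  have hBsN : Bs < Fintype.card P := lt_of_le_of_lt hb hbN
  obtain ⟨m, rfl⟩ : ∃ m, Bs = m + 1 := ⟨Bs - 1, by omega⟩
  have hmN : m < Fintype.card P := by omega
  have ham : (πs.symm x : ℕ) ≤ m := by omega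
  -- Step A : extending the budget by guessing y next is not profitable
  have hA : v * p x ≤ k * (1 - lam p πs (m + 1)) := by
    set π₁ : Fin (Fintype.card P) ≃ P :=
      (Equiv.swap (⟨m + 1, hBsN⟩ : Fin (Fintype.card P)) (πs.symm y)).trans πs with hπ₁
    have hA1 : ∀ i, i ≤ m + 1 → lam p π₁ i = lam p πs i := by
      intro i hi
      exact lam_swap_out p πs i _ _ (by simpa using hi) (le_trans hi hb)
    have hA2 : U p v k π₁ (m + 1) = U p v k πs (m + 1) :=
      U_congr p v k π₁ πs (m + 1) (fun i hi => hA1 i hi)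
    have hA3 : π₁ ⟨m + 1, hBsN⟩ = y := by
      simp [hπ₁, Equiv.swap_apply_left]
    have hA4 := U_succ p v k π₁ (m + 1) hBsN
    rw [hA3, hA2, hA1 (m + 1) le_rfl] at hA4
    have hA5 := hopt π₁ (m + 2) (by omega)
    rw [hA4] at hA5
    rw [heq]
    linarith
  -- Step C : shrinking the budget by one is not profitable
  have hC : k * (1 - lam p πs m) ≤ v * p (πs ⟨m, hmN⟩) := by
    have hC0 := U_succ p v k πs m hmN
    have hC1 := hopt πs m (by omega)
    rw [hC0] at hC1
    linarith
  have hlam : lam p πs (m + 1) = lam p πs m + p (πs ⟨m, hmN⟩) := lam_succ p πs m hmN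
  -- Step B : the last guessed password has probability at most p x
  have hrq : p (πs ⟨m, hmN⟩) ≤ p x := by
    by_cases hc : (πs.symm x : ℕ) = m
    · have : (⟨m, hmN⟩ : Fin (Fintype.card P)) = πs.symm x := by
        apply Fin.ext; simp [← hc]
      rw [this, Equiv.apply_symm_apply]
    · have ham' : (πs.symm x : ℕ) < m := lt_of_le_of_ne ham hc
      by_contra hqr
      push_neg at hqr
      set π₂ : Fin (Fintype.card P) ≃ P :=
        (Equiv.swap (πs.symm x) (⟨m, hmN⟩ : Fin (Fintype.card P))).trans πs with hπ₂
      have hπja : p (πs (πs.symm x)) = p x := by rw [Equiv.apply_symm_apply]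
      have hle : ∀ i ∈ Finset.range (m + 1), 1 - lam p π₂ i ≤ 1 - lam p πs i := by
        intro i hi
        have him : i ≤ m := by simpa [Nat.lt_succ_iff] using hi
        rcases le_or_gt i (πs.symm x : ℕ) with h | h
        · rw [lam_swap_out p πs i _ _ h (le_trans h ham)]
        · rw [lam_swap_mix p πs i _ _ h (by simp; omega), hπja]
          linarith
      have hstrict : 1 - lam p π₂ ((πs.symm x : ℕ) + 1) <
          1 - lam p πs ((πs.symm x : ℕ) + 1) := by
        rw [lam_swap_mix p πs _ _ _ (by omega) (by simp; omega), hπja]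
        linarith
      have hsum_lt : ∑ i ∈ Finset.range (m + 1), (1 - lam p π₂ i) <
          ∑ i ∈ Finset.range (m + 1), (1 - lam p πs i) :=
        Finset.sum_lt_sum hle ⟨(πs.symm x : ℕ) + 1, Finset.mem_range.mpr (by omega), hstrict⟩
      have htop : lam p π₂ (m + 1) = lam p πs (m + 1) :=
        lam_swap_in p πs (m + 1) _ _ (by omega) (by simp)
      have := hopt π₂ (m + 1) (by omega)
      unfold U at this
      rw [htop] at this
      nlinarith
  -- Final contradiction
  have hL2 : lam p πs (m + 1) ≤ 1 - p x := by
    rw [heq]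
    exact lam_le p hp hsum πs (m + 1) y hb
  have hr0 : 0 ≤ p (πs ⟨m, hmN⟩) := hp _
  have hvrq : v * p (πs ⟨m, hmN⟩) ≤ v * p x := mul_le_mul_of_nonneg_left hrq hv
  have e1 : k * (1 - lam p πs m)
      = k * (1 - lam p πs (m + 1)) + k * p (πs ⟨m, hmN⟩) := by
    rw [hlam]; ring
  have e2 : k * p (πs ⟨m, hmN⟩) ≤ 0 := by linarith
  have e3 : p (πs ⟨m, hmN⟩) = 0 := by
    by_contra h
    have h' : 0 < p (πs ⟨m, hmN⟩) := lt_of_le_of_ne hr0 (Ne.symm h)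
    nlinarith
  have e4 : k * p x ≤ k * (1 - lam p πs (m + 1)) :=
    mul_le_mul_of_nonneg_left (by linarith) hk.le
  have e5 : 0 < k * p x := mul_pos hk hpos
  rw [e3] at hC
  rw [e3] at e1
  linarith

/-- Theorem 1 (equivalence classes are checked atomically): let v ≥ 0, k > 0, and
let (π*, B*) be an optimal strategy. If p(pw_i) = p(pw_j) > 0 then
ind_{π*}(pw_i) ≤ B* ⟺ ind_{π*}(pw_j) ≤ B*. -/
theorem equivalence_class_atomic (p : P → ℝ) (hp : ∀ pw, 0 ≤ p pw)
    (hsum : ∑ pw, p pw = 1) (v k : ℝ) (hv : 0 ≤ v) (hk : 0 < k)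
    (πs : Fin (Fintype.card P) ≃ P) (Bs : ℕ) (hBs : Bs ≤ Fintype.card P)
    (hopt : ∀ (π : Fin (Fintype.card P) ≃ P) (B : ℕ), B ≤ Fintype.card P →
      U p v k π B ≤ U p v k πs Bs)
    (pwi pwj : P) (heq : p pwi = p pwj) (hpos : 0 < p pwi) :
    ((πs.symm pwi : ℕ) + 1 ≤ Bs ↔ (πs.symm pwj : ℕ) + 1 ≤ Bs) :=
  ⟨key_lemma p hp hsum v k hv hk πs Bs hBs hopt pwi pwj heq hpos,
   key_lemma p hp hsum v k hv hk πs Bs hBs hopt pwj pwi heq.symm (heq ▸ hpos)⟩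
end

section
/- Corollary (equivalence classes are checked atomically under signaling): let v ≥ 0 and k > 0, fix a signal y ∈ Y with Pr[y] > 0, and let (π*_y, B*_y) be a strategy maximizing the conditional utility U_y(v,k,·,·) over all strategies (π, B). If two passwords pw_i, pw_j ∈ P satisfy p_y(pw_i) = p_y(pw_j) > 0, then ind_{π*_y}(pw_i) ≤ B*_y if and only if ind_{π*_y}(pw_j) ≤ B*_y, where ind_{π*_y}(pw) denotes the position of pw in the order π*_y. -/
/- Context: P finite set of passwords, Y a finite set of signals,
q : P × Y → ℝ a joint probability distribution with password marginal p.
Pr[y] = Σ_{pw} q(pw,y); for Pr[y] > 0 the posterior is p_y(pw) = q(pw,y)/Pr[y].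
λ and U are as in the no-signal setting, with p replaced by the posterior p_y. -/

variable {P : Type*} [Fintype P]

/-- Posterior distribution on passwords given signal y. -/
noncomputable def post {Y : Type*} [Fintype Y] (q : P → Y → ℝ) (y : Y) : P → ℝ :=
  fun pw => q pw y / ∑ pw', q pw' y

namespace AtomicAux

lemma lam_succ (p : P → ℝ) (π : Fin (Fintype.card P) ≃ P) {B : ℕ}
    (hB : B < Fintype.card P) :
    lam p π (B + 1) = lam p π B + p (π ⟨B, hB⟩) := by
  unfold lam
  have hset : (Finset.univ.filter fun i : Fin (Fintype.card P) => (i : ℕ) < B + 1)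
      = insert ⟨B, hB⟩ (Finset.univ.filter fun i : Fin (Fintype.card P) => (i : ℕ) < B) := by
    ext i
    simp [Nat.lt_succ_iff_lt_or_eq, Fin.ext_iff, or_comm]
    omega
  rw [hset, Finset.sum_insert (by simp)]
  ring

lemma U_succ (p : P → ℝ) (v k : ℝ) (π : Fin (Fintype.card P) ≃ P) {B : ℕ}
    (hB : B < Fintype.card P) :
    U p v k π (B + 1) = U p v k π B + v * p (π ⟨B, hB⟩) - k * (1 - lam p π B) := by
  unfold U
  rw [lam_succ p π hB, Finset.sum_range_succ]
  ring

lemma lam_swap_congr (p : P → ℝ) (π : Fin (Fintype.card P) ≃ P)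
    (a b : Fin (Fintype.card P)) {B : ℕ} (hab : ((a : ℕ) < B ↔ (b : ℕ) < B)) :
    lam p ((Equiv.swap a b).trans π) B = lam p π B := by
  unfold lam
  refine Finset.sum_equiv (Equiv.swap a b) ?_ ?_
  · intro i
    simp only [Finset.mem_filter, Finset.mem_univ, true_and]
    rcases eq_or_ne i a with rfl | ha
    · rw [Equiv.swap_apply_left]; exact hab
    rcases eq_or_ne i b with rfl | hb
    · rw [Equiv.swap_apply_right]; exact hab.symm
    · rw [Equiv.swap_apply_of_ne_of_ne ha hb]
  · intro i _
    simp

lemma lam_swap_cross (p : P → ℝ) (π : Fin (Fintype.card P) ≃ P)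
    (a b : Fin (Fintype.card P)) {B : ℕ} (ha : (a : ℕ) < B) (hb : ¬ (b : ℕ) < B) :
    lam p ((Equiv.swap a b).trans π) B = lam p π B - p (π a) + p (π b) := by
  have haF : a ∈ Finset.univ.filter fun i : Fin (Fintype.card P) => (i : ℕ) < B := by
    simp [ha]
  unfold lam
  rw [← Finset.add_sum_erase _ _ haF, ← Finset.add_sum_erase _ _ haF]
  have herase : ∀ i ∈ (Finset.univ.filter
      fun i : Fin (Fintype.card P) => (i : ℕ) < B).erase a,
      p (((Equiv.swap a b).trans π) i) = p (π i) := by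
    intro i hi
    have hia : i ≠ a := Finset.ne_of_mem_erase hi
    have hib : i ≠ b := by
      rintro rfl
      exact hb (Finset.mem_filter.mp (Finset.mem_of_mem_erase hi)).2
    simp [Equiv.swap_apply_of_ne_of_ne hia hib]
  rw [Finset.sum_congr rfl herase]
  simp only [Equiv.trans_apply, Equiv.swap_apply_left]
  ring

lemma lam_add_le_one (p : P → ℝ) (hp : ∀ pw, 0 ≤ p pw) (hsum : ∑ pw, p pw = 1)
    (π : Fin (Fintype.card P) ≃ P) {B : ℕ} (b : Fin (Fintype.card P))
    (hb : ¬ (b : ℕ) < B) :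
    lam p π B + p (π b) ≤ 1 := by
  have hbF : b ∉ Finset.univ.filter fun i : Fin (Fintype.card P) => (i : ℕ) < B := by
    simp [hb]
  have h1 : lam p π B + p (π b)
      = ∑ i ∈ insert b (Finset.univ.filter
          fun i : Fin (Fintype.card P) => (i : ℕ) < B), p (π i) := by
    rw [Finset.sum_insert hbF]
    unfold lam; ring
  rw [h1]
  refine le_trans (Finset.sum_le_sum_of_subset_of_nonneg (Finset.subset_univ _)
    fun i _ _ => hp _) ?_
  rw [Equiv.sum_comp π p]
  exact hsum.le


lemma aux (p : P → ℝ) (hp : ∀ pw, 0 ≤ p pw) (hsum : ∑ pw, p pw = 1)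
    (v k : ℝ) (hv : 0 ≤ v) (hk : 0 < k)
    (πs : Fin (Fintype.card P) ≃ P) (Bs : ℕ) (hBs : Bs ≤ Fintype.card P)
    (hopt : ∀ (π : Fin (Fintype.card P) ≃ P) (B : ℕ), B ≤ Fintype.card P →
      U p v k π B ≤ U p v k πs Bs)
    (pwi pwj : P) (heq : p pwi = p pwj) (hpos : 0 < p pwi)
    (hi : (πs.symm pwi : ℕ) + 1 ≤ Bs) : (πs.symm pwj : ℕ) + 1 ≤ Bs := by
  by_contra hj
  push_neg at hj
  set r := πs.symm pwi with hrdef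
  set s := πs.symm pwj with hsdef
  have hsB : Bs ≤ (s : ℕ) := by omega
  have hrB : (r : ℕ) < Bs := by omega
  have hBn : Bs < Fintype.card P := lt_of_le_of_lt hsB s.isLt
  obtain ⟨B1, rfl⟩ : ∃ B1, Bs = B1 + 1 := ⟨Bs - 1, by omega⟩
  have hB1n : B1 < Fintype.card P := by omega
  have hπsr : πs r = pwi := πs.apply_symm_apply pwi
  have hπss : πs s = pwj := πs.apply_symm_apply pwj
  set c := p (πs ⟨B1, hB1n⟩) with hcdef
  have hc0 : 0 ≤ c := hp _
  -- Fact A : dropping the last guess does not help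
  have hA : k * (1 - lam p πs B1) ≤ v * c := by
    have h := hopt πs B1 (by omega)
    rw [U_succ p v k πs hB1n] at h
    linarith
  have hlamsucc : lam p πs (B1 + 1) = lam p πs B1 + c := lam_succ p πs hB1n
  -- Fact B : extending the budget with pwj does not help
  have hB2 : v * p pwi ≤ k * (1 - lam p πs B1 - c) := by
    set π₂ := (Equiv.swap ⟨B1 + 1, hBn⟩ s).trans πs with hπ₂
    have hlam2 : ∀ i, i ≤ B1 + 1 → lam p π₂ i = lam p πs i := by
      intro i hi'
      refine lam_swap_congr p πs _ s ?_
      have h1 : ((⟨B1 + 1, hBn⟩ : Fin (Fintype.card P)) : ℕ) = B1 + 1 := rfl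
      rw [h1]
      omega
    have hU2 : U p v k π₂ (B1 + 1) = U p v k πs (B1 + 1) := by
      unfold U
      rw [hlam2 _ le_rfl]
      have : ∑ i ∈ Finset.range (B1 + 1), (1 - lam p π₂ i)
          = ∑ i ∈ Finset.range (B1 + 1), (1 - lam p πs i) :=
        Finset.sum_congr rfl fun i hi' => by
          rw [hlam2 i (le_of_lt (Finset.mem_range.mp hi'))]
      rw [this]
    have hπ₂b : π₂ ⟨B1 + 1, hBn⟩ = pwj := by
      rw [hπ₂]
      simp [Equiv.swap_apply_left, hπss]
    have h := hopt π₂ (B1 + 1 + 1) (by omega)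
    rw [U_succ p v k π₂ hBn, hU2, hlam2 _ le_rfl, hlamsucc, hπ₂b, ← heq] at h
    linarith
  -- Fact C : c ≤ p pwi
  have hcP : c ≤ p pwi := by
    rcases eq_or_lt_of_le (Nat.lt_succ_iff.mp hrB) with hre | hrlt
    · have hfin : (⟨B1, hB1n⟩ : Fin (Fintype.card P)) = r := Fin.ext hre.symm
      rw [hcdef, hfin, hπsr]
    · set π₃ := (Equiv.swap r ⟨B1, hB1n⟩).trans πs with hπ₃
      have hlam3top : lam p π₃ (B1 + 1) = lam p πs (B1 + 1) := by
        refine lam_swap_congr p πs r _ ?_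
        have h1 : ((⟨B1, hB1n⟩ : Fin (Fintype.card P)) : ℕ) = B1 := rfl
        rw [h1]
        omega
      have hlam3 : ∀ i ∈ Finset.range (B1 + 1),
          lam p π₃ i = lam p πs i + (if (r : ℕ) < i then c - p pwi else 0) := by
        intro i hi'
        have hiB : i < B1 + 1 := Finset.mem_range.mp hi'
        have h1 : ((⟨B1, hB1n⟩ : Fin (Fintype.card P)) : ℕ) = B1 := rfl
        by_cases hri : (r : ℕ) < i
        · rw [if_pos hri]
          rw [lam_swap_cross p πs r _ hri (by rw [h1]; omega), hπsr]
          ring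
        · rw [if_neg hri]
          rw [lam_swap_congr p πs r _ (by rw [h1]; omega), add_zero]
      have h := hopt π₃ (B1 + 1) (by omega)
      unfold U at h
      rw [hlam3top, Finset.sum_congr rfl (fun i hi' => by rw [hlam3 i hi'])] at h
      have hsplit : ∑ i ∈ Finset.range (B1 + 1),
          (1 - (lam p πs i + if (r : ℕ) < i then c - p pwi else 0))
          = ∑ i ∈ Finset.range (B1 + 1), (1 - lam p πs i)
            - ∑ i ∈ Finset.range (B1 + 1), (if (r : ℕ) < i then c - p pwi else 0) := by
        rw [← Finset.sum_sub_distrib]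
        exact Finset.sum_congr rfl fun i _ => by ring
      rw [hsplit] at h
      have hS : ∑ i ∈ Finset.range (B1 + 1), (if (r : ℕ) < i then c - p pwi else 0)
          = ((B1 - (r : ℕ) : ℕ) : ℝ) * (c - p pwi) := by
        rw [← Finset.sum_filter]
        rw [Finset.sum_const]
        have hcard : ((Finset.range (B1 + 1)).filter (fun i => (r : ℕ) < i)).card
            = B1 - (r : ℕ) := by
          have : (Finset.range (B1 + 1)).filter (fun i => (r : ℕ) < i)
              = Finset.Ico ((r : ℕ) + 1) (B1 + 1) := by
            ext i
            simp only [Finset.mem_filter, Finset.mem_range, Finset.mem_Ico]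
            omega
          rw [this, Nat.card_Ico]
          omega
        rw [hcard, nsmul_eq_mul]
      rw [hS] at h
      have hX : k * (((B1 - (r : ℕ) : ℕ) : ℝ) * (c - p pwi)) ≤ 0 := by linarith
      have hSle : ((B1 - (r : ℕ) : ℕ) : ℝ) * (c - p pwi) ≤ 0 := by
        by_contra hcon
        push_neg at hcon
        nlinarith [mul_pos hk hcon]
      have hcnt : (1 : ℝ) ≤ ((B1 - (r : ℕ) : ℕ) : ℝ) := by
        have h4 : 1 ≤ B1 - (r : ℕ) := by omega
        exact_mod_cast h4
      by_contra hcon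
      push_neg at hcon
      have h3 : (1 : ℝ) * (c - p pwi) ≤ ((B1 - (r : ℕ) : ℕ) : ℝ) * (c - p pwi) :=
        mul_le_mul_of_nonneg_right hcnt (by linarith)
      linarith
  -- Final contradiction
  have hex : lam p πs B1 + p pwi ≤ 1 := by
    have h := lam_add_le_one p hp hsum πs s (show ¬ ((s : ℕ) < B1) by omega)
    rw [hπss, ← heq] at h
    exact h
  have h1 : k * c ≤ v * (c - p pwi) := by linarith
  have h2 : v * (c - p pwi) ≤ 0 := by
    have := mul_le_mul_of_nonneg_left (show c - p pwi ≤ 0 by linarith) hv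
    simpa using this
  have hceq : c = 0 := by nlinarith
  rw [hceq] at hA
  nlinarith

end AtomicAux

/-- Corollary (equivalence classes are checked atomically under signaling): let v ≥ 0,
k > 0, fix a signal y with Pr[y] > 0 and let (π*_y, B*_y) maximize the conditional
utility U_y. If p_y(pw_i) = p_y(pw_j) > 0 then
ind_{π*_y}(pw_i) ≤ B*_y ⟺ ind_{π*_y}(pw_j) ≤ B*_y. -/
theorem equivalence_class_atomic_signaling {Y : Type*} [Fintype Y]
    (p : P → ℝ) (hp : ∀ pw, 0 ≤ p pw) (hsum : ∑ pw, p pw = 1)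
    (q : P → Y → ℝ) (hq : ∀ pw y, 0 ≤ q pw y)
    (hqsum : ∑ pw, ∑ y, q pw y = 1)
    (hmarg : ∀ pw, p pw = ∑ y, q pw y)
    (v k : ℝ) (hv : 0 ≤ v) (hk : 0 < k)
    (y : Y) (hy : 0 < ∑ pw, q pw y)
    (πs : Fin (Fintype.card P) ≃ P) (Bs : ℕ) (hBs : Bs ≤ Fintype.card P)
    (hopt : ∀ (π : Fin (Fintype.card P) ≃ P) (B : ℕ), B ≤ Fintype.card P →
      U (post q y) v k π B ≤ U (post q y) v k πs Bs)
    (pwi pwj : P) (heq : post q y pwi = post q y pwj) (hpos : 0 < post q y pwi) :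
    ((πs.symm pwi : ℕ) + 1 ≤ Bs ↔ (πs.symm pwj : ℕ) + 1 ≤ Bs) := by
  have hp0 : ∀ pw, 0 ≤ post q y pw := fun pw => div_nonneg (hq pw y) hy.le
  have hs1 : ∑ pw, post q y pw = 1 := by
    unfold post
    rw [← Finset.sum_div, div_self hy.ne']
  constructor
  · exact AtomicAux.aux (post q y) hp0 hs1 v k hv hk πs Bs hBs hopt pwi pwj heq hpos
  · exact AtomicAux.aux (post q y) hp0 hs1 v k hv hk πs Bs hBs hopt pwj pwi heq.symm
      (heq ▸ hpos)
end

section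
/- The attacker gives up on signal Sig = 1: if k > 0 and 0 < ε < k/3, then for every natural number B ≥ 1 the conditional utility at v = 2k + ε satisfies −k/3 + ε·(1 − 2^{2−B}/3) < 0; hence U_1(2k+ε, k, B) < 0 = U_1(2k+ε, k, 0) for all B ≥ 1, so the unique optimal budget on signal 1 is B* = 0 (the attacker makes no guesses). -/
/- Geometric example with signaling: given Sig = 1, the conditional utility of
checking pw_1, pw_2, … with budget B ≥ 1 is
U_1(v,k,B) = v·(1 − 2^{2−B}/3) − k·(7/3 − 2^{3−B}/3), with U_1(v,k,0) = 0. -/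

noncomputable def U1 (v k : ℝ) (B : ℕ) : ℝ :=
  if B = 0 then 0
  else v * (1 - (2 : ℝ) ^ ((2 : ℤ) - (B : ℤ)) / 3)
        - k * (7 / 3 - (2 : ℝ) ^ ((3 : ℤ) - (B : ℤ)) / 3)

/-- The attacker gives up on signal Sig = 1: if k > 0 and 0 < ε < k/3, then for every
B ≥ 1 the conditional utility at v = 2k + ε satisfies
−k/3 + ε·(1 − 2^{2−B}/3) < 0; hence U_1(2k+ε, k, B) < 0 = U_1(2k+ε, k, 0) for all
B ≥ 1, so the unique optimal budget on signal 1 is B* = 0. -/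
theorem attacker_gives_up_on_signal_one (k ε : ℝ) (hk : 0 < k) (hε : 0 < ε)
    (hεk : ε < k / 3) :
    (∀ B : ℕ, 1 ≤ B → -k / 3 + ε * (1 - (2 : ℝ) ^ ((2 : ℤ) - (B : ℤ)) / 3) < 0) ∧
    (∀ B : ℕ, 1 ≤ B → U1 (2 * k + ε) k B < 0) ∧
    U1 (2 * k + ε) k 0 = 0 ∧
    (∀ B : ℕ, 1 ≤ B → U1 (2 * k + ε) k B < U1 (2 * k + ε) k 0) := by
  have key : ∀ B : ℕ, 1 ≤ B → -k / 3 + ε * (1 - (2 : ℝ) ^ ((2 : ℤ) - (B : ℤ)) / 3) < 0 := by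
    intro B hB
    have hx : (0:ℝ) < (2:ℝ) ^ ((2:ℤ) - (B:ℤ)) := zpow_pos (by norm_num) _
    nlinarith
  have key2 : ∀ B : ℕ, 1 ≤ B → U1 (2 * k + ε) k B < 0 := by
    intro B hB
    have hB0 : B ≠ 0 := by omega
    have h2 : (2:ℝ) ^ ((3:ℤ) - (B:ℤ)) = 2 * (2:ℝ) ^ ((2:ℤ) - (B:ℤ)) := by
      rw [show (3:ℤ) - (B:ℤ) = 1 + ((2:ℤ) - (B:ℤ)) by ring,
        zpow_add₀ (by norm_num : (2:ℝ) ≠ 0), zpow_one]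
    have hk' := key B hB
    simp only [U1, hB0, if_false]
    rw [h2]; nlinarith
  have h0 : U1 (2 * k + ε) k 0 = 0 := by simp [U1]
  exact ⟨key, key2, h0, fun B hB => by rw [h0]; exact key2 B hB⟩
end
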